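/- Let K be a field, n = 2m an even integer with m ≥ 1, and let ≻ be any monomial order on R = K[x_{ij} : 1 ≤ i ≤ j ≤ n] such that for all 1 ≤ i < h ≤ n and 1 ≤ j < k ≤ n the ≻-leading monomial of the 2-minor X_{ij}X_{hk} − X_{ik}X_{hj} is the antidiagonal X_{ik}X_{hj} when i + j = n + 1 or h + k = n + 1, and is the main diagonal X_{ij}X_{hk} otherwise. Then the initial ideal in_≻(J(2,n)) equals K(2,n). -/

import Mathlib

open MvPolynomial

/-- `d` is the leading monomial (exponent vector) of `f` with respect to the
monomial order `m`. -/
def IsLeadingMonomial {σ K : Type*} [CommSemiring K] (m : MonomialOrder σ)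
    (f : MvPolynomial σ K) (d : σ →₀ ℕ) : Prop :=
  d ∈ f.support ∧ ∀ e ∈ f.support, e ≠ d → m.toSyn e < m.toSyn d

/-- The initial ideal of `I` with respect to the monomial order `m`. -/
noncomputable def initialIdeal {σ K : Type*} [CommSemiring K] (m : MonomialOrder σ)
    (I : Ideal (MvPolynomial σ K)) : Ideal (MvPolynomial σ K) :=
  Ideal.span {g : MvPolynomial σ K |
    ∃ f ∈ I, ∃ d, IsLeadingMonomial m f d ∧ g = monomial d 1}

/-- Index set of the variables `x_{ij}`, `1 ≤ i ≤ j ≤ n`, of the polynomial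
ring in the entries of the generic symmetric `n × n` matrix. -/
abbrev SymIdx (n : ℕ) := {p : Fin n × Fin n // p.1 ≤ p.2}

/-- The index of the variable `X_{ab} = x_{min(a,b), max(a,b)}`. -/
def symIdx {n : ℕ} (a b : Fin n) : SymIdx n := ⟨(min a b, max a b), min_le_max⟩

/-- The entry `X_{ab}` of the generic symmetric matrix as a polynomial. -/
noncomputable def Xsym (K : Type*) [Field K] {n : ℕ} (a b : Fin n) :
    MvPolynomial (SymIdx n) K :=
  X (symIdx a b)

/-- The 2-minor `X_{ij} X_{hk} - X_{ik} X_{hj}` of the generic symmetric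
matrix. -/
noncomputable def symMinor (K : Type*) [Field K] {n : ℕ} (i h j k : Fin n) :
    MvPolynomial (SymIdx n) K :=
  Xsym K i j * Xsym K h k - Xsym K i k * Xsym K h j

/-- The exponent vector of `X_{ab} X_{cd}`. -/
noncomputable def symMon {n : ℕ} (a b c d : Fin n) : SymIdx n →₀ ℕ :=
  Finsupp.single (symIdx a b) 1 + Finsupp.single (symIdx c d) 1

/-- In one-based indexing, `a + b = n + 1` (here `a b : Fin n` are
zero-based). -/
def IsAnti (n : ℕ) (a b : Fin n) : Prop := ((a : ℕ) + 1) + ((b : ℕ) + 1) = n + 1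

/-- The ideal `J(2,n)` generated by the 2-minors of the generic symmetric
`n × n` matrix. -/
noncomputable def symMinorsIdeal (K : Type*) [Field K] (n : ℕ) :
    Ideal (MvPolynomial (SymIdx n) K) :=
  Ideal.span {f : MvPolynomial (SymIdx n) K |
    ∃ i h j k : Fin n, i < h ∧ j < k ∧ f = symMinor K i h j k}

/-- The monomial ideal `K(2,n)`: generated by the monomials `x_{ij}x_{hk}`
with `i ≤ j`, `h ≤ k`, `i + j ≠ n + 1`, `h + k ≠ n + 1`, such that either (1)
`a + b = n + 1` for some `a ∈ {i,j}` and `b ∈ {h,k}`, or (2) `i < h` and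
`j < k`. -/
noncomputable def Kideal (K : Type*) [Field K] (n : ℕ) :
    Ideal (MvPolynomial (SymIdx n) K) :=
  Ideal.span {g : MvPolynomial (SymIdx n) K |
    ∃ i j h k : Fin n, ∃ _ : i ≤ j, ∃ _ : h ≤ k,
      ¬ IsAnti n i j ∧ ¬ IsAnti n h k ∧
      ((IsAnti n i h ∨ IsAnti n i k ∨ IsAnti n j h ∨ IsAnti n j k) ∨
        (i < h ∧ j < k)) ∧
      g = X (symIdx i j) * X (symIdx h k)}

/- ### Auxiliary development -/

namespace SymAux

variable {n : ℕ}

lemma isAnti_comm {a b : Fin n} (h : IsAnti n a b) : IsAnti n b a := by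
  unfold IsAnti at *; omega

lemma symIdx_comm (a b : Fin n) : symIdx a b = symIdx b a := by
  unfold symIdx
  exact Subtype.ext (Prod.ext (min_comm a b) (max_comm a b))

lemma symIdx_of_le {a b : Fin n} (h : a ≤ b) : symIdx a b = ⟨(a, b), h⟩ := by
  unfold symIdx
  exact Subtype.ext (Prod.ext (min_eq_left h) (max_eq_right h))

lemma symIdx_eta (P : SymIdx n) : symIdx P.1.1 P.1.2 = P := by
  rw [symIdx_of_le P.2]

/-- The condition on (sorted) pairs `P`, `Q` for `X_P X_Q` to be a generator
of `Kideal`. -/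
def GenCond (n : ℕ) (P Q : SymIdx n) : Prop :=
  ¬ IsAnti n P.1.1 P.1.2 ∧ ¬ IsAnti n Q.1.1 Q.1.2 ∧
  ((IsAnti n P.1.1 Q.1.1 ∨ IsAnti n P.1.1 Q.1.2 ∨ IsAnti n P.1.2 Q.1.1 ∨
      IsAnti n P.1.2 Q.1.2) ∨ (P.1.1 < Q.1.1 ∧ P.1.2 < Q.1.2))

/-- A standard exponent: no `Kideal` generator divides it. -/
def Std (n : ℕ) (u : SymIdx n →₀ ℕ) : Prop :=
  ∀ P ∈ u.support, ∀ Q ∈ u.support, ¬ GenCond n P Q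

lemma genCond_ne (hpar : n % 2 = 0) {P Q : SymIdx n} (h : GenCond n P Q) :
    P ≠ Q := by
  rintro rfl
  obtain ⟨h1, -, h3 | h3⟩ := h
  · have hle := P.2
    have : (P.1.1 : ℕ) ≤ P.1.2 := hle
    rcases h3 with h3 | h3 | h3 | h3 <;> unfold IsAnti at * <;> omega
  · exact lt_irrefl _ h3.1

lemma std_mono {u v : SymIdx n →₀ ℕ} (hle : u ≤ v) (hv : Std n v) : Std n u := by
  intro P hP Q hQ
  have h1 : P ∈ v.support := by
    rw [Finsupp.mem_support_iff] at *
    have := hle P; omega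
  have h2 : Q ∈ v.support := by
    rw [Finsupp.mem_support_iff] at *
    have := hle Q; omega
  exact hv P h1 Q h2

/- ### The multidegree map -/

/-- Multiplicity of vertex `a` in the pair `P`. -/
def cnt (a : Fin n) (P : SymIdx n) : ℕ :=
  (if P.1.1 = a then 1 else 0) + (if P.1.2 = a then 1 else 0)

/-- The degree of vertex `a` in the multigraph given by `u`. -/
def deg (a : Fin n) (u : SymIdx n →₀ ℕ) : ℕ :=
  u.sum fun P v => v * cnt a P

lemma deg_add (a : Fin n) (u v : SymIdx n →₀ ℕ) :
    deg a (u + v) = deg a u + deg a v := by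
  unfold deg
  exact Finsupp.sum_add_index' (fun P => by simp) (fun P v w => add_mul v w _)

lemma deg_single (a : Fin n) (P : SymIdx n) (k : ℕ) :
    deg a (Finsupp.single P k) = k * cnt a P := by
  unfold deg
  exact Finsupp.sum_single_index (by simp)

lemma deg_pos_of_mem {u : SymIdx n →₀ ℕ} {P : SymIdx n} (hP : P ∈ u.support)
    {a : Fin n} (ha : P.1.1 = a ∨ P.1.2 = a) : 0 < deg a u := by
  unfold deg Finsupp.sum
  have h1 : 0 < u P * cnt a P := by
    rw [Finsupp.mem_support_iff] at hP
    have : 0 < cnt a P := by unfold cnt; rcases ha with h | h <;> simp [h]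
    exact Nat.mul_pos (Nat.pos_of_ne_zero hP) this
  exact lt_of_lt_of_le h1
    (Finset.single_le_sum (f := fun P => u P * cnt a P) (fun _ _ => Nat.zero_le _) hP)

lemma exists_mem_of_deg_pos {u : SymIdx n →₀ ℕ} {a : Fin n}
    (h : 0 < deg a u) : ∃ P ∈ u.support, P.1.1 = a ∨ P.1.2 = a := by
  unfold deg Finsupp.sum at h
  by_contra hc
  push_neg at hc
  refine absurd h (by
    rw [Finset.sum_eq_zero]
    · exact lt_irrefl 0
    intro P hP
    have := hc P hP
    simp only [cnt, if_neg this.1, if_neg this.2]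
    simp)


lemma deg_eq_of_add {u v w : SymIdx n →₀ ℕ} (h : u = v + w) (a : Fin n) :
    deg a u = deg a v + deg a w := by rw [h, deg_add]

/-- The total size (degree) of an exponent vector. -/
def sz (u : SymIdx n →₀ ℕ) : ℕ := u.sum fun _ v => v

lemma sz_add (u v : SymIdx n →₀ ℕ) : sz (u + v) = sz u + sz v := by
  unfold sz
  exact Finsupp.sum_add_index' (fun _ => rfl) (fun _ _ _ => rfl)

lemma sz_single (P : SymIdx n) (k : ℕ) : sz (Finsupp.single P k) = k := by
  unfold sz
  exact Finsupp.sum_single_index rfl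

lemma eq_zero_of_sz {u : SymIdx n →₀ ℕ} (h : sz u = 0) : u = 0 := by
  unfold sz Finsupp.sum at h
  rw [Finset.sum_eq_zero_iff] at h
  ext P
  by_cases hP : P ∈ u.support
  · exact h P hP
  · simpa [Finsupp.notMem_support_iff] using hP

lemma eq_zero_of_deg {v : SymIdx n →₀ ℕ} (h : ∀ a, deg a v = 0) : v = 0 := by
  by_contra hc
  obtain ⟨P, hP⟩ := Finsupp.support_nonempty_iff.mpr hc
  have := deg_pos_of_mem hP (Or.inl rfl)
  rw [h] at this
  exact lt_irrefl 0 this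

/-- If an anti pair occurs in `u`, it occurs in anything standard with the
same degrees. -/
lemma anti_common (hpar : n % 2 = 0) {u v : SymIdx n →₀ ℕ}
    (hv : Std n v) (hdeg : ∀ a, deg a u = deg a v)
    {P : SymIdx n} (hP : P ∈ u.support) (hanti : IsAnti n P.1.1 P.1.2) :
    P ∈ v.support := by
  by_contra hc
  have hda : 0 < deg P.1.1 v := by rw [← hdeg]; exact deg_pos_of_mem hP (Or.inl rfl)
  have hdb : 0 < deg P.1.2 v := by rw [← hdeg]; exact deg_pos_of_mem hP (Or.inr rfl)
  obtain ⟨Q, hQ, hQa⟩ := exists_mem_of_deg_pos hda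
  obtain ⟨Q', hQ', hQ'b⟩ := exists_mem_of_deg_pos hdb
  -- any pair in `v.support` containing `P.1.1` or `P.1.2` is not anti
  have key : ∀ R ∈ v.support, (R.1.1 = P.1.1 ∨ R.1.2 = P.1.1 ∨
      R.1.1 = P.1.2 ∨ R.1.2 = P.1.2) → ¬ IsAnti n R.1.1 R.1.2 := by
    intro R hR hmem hRanti
    apply hc
    have hRP : R = P := by
      have e1 : (R.1.1 : ℕ) ≤ R.1.2 := R.2
      have e2 : (P.1.1 : ℕ) ≤ P.1.2 := P.2
      have e3 : ((R.1.1 : ℕ) + 1) + ((R.1.2 : ℕ) + 1) = n + 1 := hRanti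
      have e4 : ((P.1.1 : ℕ) + 1) + ((P.1.2 : ℕ) + 1) = n + 1 := hanti
      have : (R.1.1 : ℕ) = P.1.1 ∧ (R.1.2 : ℕ) = P.1.2 := by
        rcases hmem with h | h | h | h <;> (have := congrArg (Fin.val) h; omega)
      exact Subtype.ext (Prod.ext (Fin.ext this.1) (Fin.ext this.2))
    rwa [hRP] at hR
  have hQna : ¬ IsAnti n Q.1.1 Q.1.2 := by
    apply key Q hQ
    rcases hQa with h | h
    · exact Or.inl h
    · exact Or.inr (Or.inl h)
  have hQ'na : ¬ IsAnti n Q'.1.1 Q'.1.2 := by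
    apply key Q' hQ'
    rcases hQ'b with h | h
    · exact Or.inr (Or.inr (Or.inl h))
    · exact Or.inr (Or.inr (Or.inr h))
  -- `Q` contains `P.1.1`, `Q'` contains `P.1.2`, which are anti: generator!
  apply hv Q hQ Q' hQ'
  refine ⟨hQna, hQ'na, Or.inl ?_⟩
  rcases hQa with h | h <;> rcases hQ'b with h' | h'
  · exact Or.inl (by rw [h, h']; exact hanti)
  · exact Or.inr (Or.inl (by rw [h, h']; exact hanti))
  · exact Or.inr (Or.inr (Or.inl (by rw [h, h']; exact hanti)))
  · exact Or.inr (Or.inr (Or.inr (by rw [h, h']; exact hanti)))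

/-- For a standard, anti-free `w`, the pair (min vertex, max vertex) occurs. -/
lemma top_edge {w : SymIdx n →₀ ℕ} (hw : Std n w)
    (hnoanti : ∀ P ∈ w.support, ¬ IsAnti n P.1.1 P.1.2)
    {a0 b0 : Fin n}
    (hmin : ∀ P ∈ w.support, a0 ≤ P.1.1) (hmax : ∀ P ∈ w.support, P.1.2 ≤ b0)
    (ha : ∃ P ∈ w.support, P.1.1 = a0 ∨ P.1.2 = a0)
    (hb : ∃ P ∈ w.support, P.1.1 = b0 ∨ P.1.2 = b0)
    {R : SymIdx n} (hR1 : R.1.1 = a0) (hR2 : R.1.2 = b0) :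
    R ∈ w.support := by
  obtain ⟨P, hP, hPa⟩ := ha
  obtain ⟨Q, hQ, hQb⟩ := hb
  have hP1 : P.1.1 = a0 := by
    rcases hPa with h | h
    · exact h
    · exact le_antisymm (le_trans P.2 h.le) (hmin P hP)
  have hQ2 : Q.1.2 = b0 := by
    rcases hQb with h | h
    · exact le_antisymm (hmax Q hQ) (h ▸ Q.2)
    · exact h
  have hfin : ∀ S ∈ w.support, S.1.1 = a0 → S.1.2 = b0 → R ∈ w.support := by
    intro S hS h1 h2
    have : S = R := Subtype.ext (Prod.ext (h1.trans hR1.symm) (h2.trans hR2.symm))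
    rwa [this] at hS
  by_cases hPQ : P = Q
  · exact hfin P hP hP1 (hPQ ▸ hQ2)
  · have hng := hw P hP Q hQ
    unfold GenCond at hng
    push_neg at hng
    have h2 := (hng (hnoanti P hP) (hnoanti Q hQ)).2
    by_cases hc : P.1.1 < Q.1.1
    · have : Q.1.2 ≤ P.1.2 := h2 hc
      exact hfin P hP hP1 (le_antisymm (hmax P hP) (hQ2 ▸ this))
    · have : Q.1.1 ≤ P.1.1 := not_lt.mp hc
      exact hfin Q hQ (le_antisymm (hP1 ▸ this) (hmin Q hQ)) hQ2


lemma exists_common (hpar : n % 2 = 0) {u v : SymIdx n →₀ ℕ}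
    (hu : Std n u) (hv : Std n v) (hdeg : ∀ a, deg a u = deg a v)
    (hne : u ≠ 0) : ∃ R, R ∈ u.support ∧ R ∈ v.support := by
  by_cases hA : ∃ P ∈ u.support, IsAnti n P.1.1 P.1.2
  · obtain ⟨P, hP, hPanti⟩ := hA
    exact ⟨P, hP, anti_common hpar hv hdeg hP hPanti⟩
  · push_neg at hA
    -- `v` is also anti-free
    have hB : ∀ Q ∈ v.support, ¬ IsAnti n Q.1.1 Q.1.2 := by
      intro Q hQ hQanti
      exact absurd (anti_common hpar hu (fun a => (hdeg a).symm) hQ hQanti)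
        (fun h => hA Q h hQanti)
    -- the set of vertices of positive degree
    classical
    set A : Finset (Fin n) := Finset.univ.filter (fun a => 0 < deg a u) with hAdef
    have hmemA : ∀ a, a ∈ A ↔ 0 < deg a u := by
      intro a; simp [hAdef]
    obtain ⟨P0, hP0⟩ := Finsupp.support_nonempty_iff.mpr hne
    have hAne : A.Nonempty :=
      ⟨P0.1.1, (hmemA _).mpr (deg_pos_of_mem hP0 (Or.inl rfl))⟩
    set a0 := A.min' hAne with ha0
    set b0 := A.max' hAne with hb0
    have hendA : ∀ (w : SymIdx n →₀ ℕ), (∀ a, deg a w = deg a u) →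
        ∀ P ∈ w.support, a0 ≤ P.1.1 ∧ P.1.2 ≤ b0 := by
      intro w hw P hP
      constructor
      · exact A.min'_le _ ((hmemA _).mpr (by
          rw [← hw]; exact deg_pos_of_mem hP (Or.inl rfl)))
      · exact A.le_max' _ ((hmemA _).mpr (by
          rw [← hw]; exact deg_pos_of_mem hP (Or.inr rfl)))
    have ha0b0 : a0 ≤ b0 := le_trans (hendA u (fun _ => rfl) P0 hP0).1
      (le_trans P0.2 (hendA u (fun _ => rfl) P0 hP0).2)
    refine ⟨⟨(a0, b0), ha0b0⟩, ?_, ?_⟩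
    · apply top_edge hu hA (fun P hP => (hendA u (fun _ => rfl) P hP).1)
        (fun P hP => (hendA u (fun _ => rfl) P hP).2) ?_ ?_ rfl rfl
      · -- some edge of u touches a0
        have : 0 < deg a0 u := (hmemA _).mp (A.min'_mem hAne)
        obtain ⟨P, hP, hPa⟩ := exists_mem_of_deg_pos this
        exact ⟨P, hP, hPa⟩
      · have : 0 < deg b0 u := (hmemA _).mp (A.max'_mem hAne)
        obtain ⟨P, hP, hPa⟩ := exists_mem_of_deg_pos this
        exact ⟨P, hP, hPa⟩
    · apply top_edge hv hB (fun P hP => (hendA v (fun a => (hdeg a).symm) P hP).1)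
        (fun P hP => (hendA v (fun a => (hdeg a).symm) P hP).2) ?_ ?_ rfl rfl
      · have : 0 < deg a0 v := by rw [← hdeg]; exact (hmemA _).mp (A.min'_mem hAne)
        obtain ⟨P, hP, hPa⟩ := exists_mem_of_deg_pos this
        exact ⟨P, hP, hPa⟩
      · have : 0 < deg b0 v := by rw [← hdeg]; exact (hmemA _).mp (A.max'_mem hAne)
        obtain ⟨P, hP, hPa⟩ := exists_mem_of_deg_pos this
        exact ⟨P, hP, hPa⟩

/-- Injectivity of the multidegree on standard exponents. -/
lemma std_deg_inj (hpar : n % 2 = 0) {u v : SymIdx n →₀ ℕ}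
    (hu : Std n u) (hv : Std n v) (hdeg : ∀ a, deg a u = deg a v) : u = v := by
  classical
  obtain ⟨N, hN⟩ : ∃ N, sz u ≤ N := ⟨sz u, le_rfl⟩
  induction N generalizing u v with
  | zero =>
    have hu0 : u = 0 := eq_zero_of_sz (Nat.le_zero.mp hN)
    subst hu0
    refine (eq_zero_of_deg fun a => ?_).symm
    rw [← hdeg]; simp [deg]
  | succ N ih =>
    by_cases hz : u = 0
    · subst hz
      refine (eq_zero_of_deg fun a => ?_).symm
      rw [← hdeg]; simp [deg]
    · obtain ⟨R, hRu, hRv⟩ := exists_common hpar hu hv hdeg hz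
      rw [Finsupp.mem_support_iff] at hRu hRv
      have h1u : Finsupp.single R 1 ≤ u := by
        rw [Finsupp.single_le_iff]; omega
      have h1v : Finsupp.single R 1 ≤ v := by
        rw [Finsupp.single_le_iff]; omega
      set u' := u - Finsupp.single R 1 with hu'
      set v' := v - Finsupp.single R 1 with hv'
      have hu'' : u = u' + Finsupp.single R 1 := (tsub_add_cancel_of_le h1u).symm
      have hv'' : v = v' + Finsupp.single R 1 := (tsub_add_cancel_of_le h1v).symm
      have hdeg' : ∀ a, deg a u' = deg a v' := by
        intro a
        have e1 := deg_eq_of_add hu'' a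
        have e2 := deg_eq_of_add hv'' a
        have := hdeg a
        omega
      have hsz : sz u' ≤ N := by
        have := congrArg sz hu''
        rw [sz_add, sz_single] at this
        omega
      have hfin := ih (std_mono tsub_le_self hu) (std_mono tsub_le_self hv) hdeg' hsz
      rw [hu'', hv'', show u' = v' from hfin]


/- ### The Veronese substitution -/

/-- The multidegree as a `Finsupp`. -/
noncomputable def Dfin (u : SymIdx n →₀ ℕ) : Fin n →₀ ℕ :=
  u.sum fun P v => v • (Finsupp.single P.1.1 1 + Finsupp.single P.1.2 1)

lemma Dfin_apply (u : SymIdx n →₀ ℕ) (a : Fin n) : Dfin u a = deg a u := by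
  classical
  unfold Dfin deg Finsupp.sum
  rw [Finset.sum_apply']
  refine Finset.sum_congr rfl fun P _ => ?_
  simp only [cnt, Finsupp.smul_apply, Finsupp.add_apply, Finsupp.single_apply,
    smul_eq_mul]

lemma Dfin_add (u v : SymIdx n →₀ ℕ) : Dfin (u + v) = Dfin u + Dfin v := by
  unfold Dfin
  exact Finsupp.sum_add_index' (fun P => by simp) (fun P v w => add_smul v w _)

lemma Dfin_single (P : SymIdx n) (k : ℕ) :
    Dfin (Finsupp.single P k) =
      k • (Finsupp.single P.1.1 1 + Finsupp.single P.1.2 1) := by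
  unfold Dfin
  exact Finsupp.sum_single_index (by simp)

variable (K : Type*) [Field K]

/-- The Veronese substitution `x_{ij} ↦ y_i y_j`. -/
noncomputable def phi : MvPolynomial (SymIdx n) K →ₐ[K] MvPolynomial (Fin n) K :=
  aeval fun P : SymIdx n => X P.1.1 * X P.1.2

lemma X_mul_X {σ : Type*} (a b : σ) :
    (X a : MvPolynomial σ K) * X b =
      monomial (Finsupp.single a 1 + Finsupp.single b 1) 1 := by
  rw [X, X, monomial_mul, one_mul]

lemma phi_monomial (u : SymIdx n →₀ ℕ) :
    phi K (monomial u (1 : K)) = monomial (Dfin u) 1 := by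
  classical
  induction u using Finsupp.induction with
  | zero => simp [phi, Dfin]
  | single_add P k u hPu hk ih =>
    have hsplit : monomial (Finsupp.single P k + u) (1 : K) =
        monomial (Finsupp.single P k) 1 * monomial u 1 := by
      rw [monomial_mul, one_mul]
    rw [hsplit, map_mul, ih, Dfin_add, Dfin_single]
    have h1 : phi K (monomial (Finsupp.single P k) 1) =
        monomial (k • (Finsupp.single P.1.1 1 + Finsupp.single P.1.2 1)) 1 := by
      rw [← X_pow_eq_monomial, map_pow]
      have : phi K (X P) = X P.1.1 * X P.1.2 := by simp [phi]
      rw [this, X_mul_X, monomial_pow, one_pow]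
    rw [h1, monomial_mul, one_mul]

lemma phi_symMinor (i h j k : Fin n) : phi K (symMinor K i h j k) = 0 := by
  have hX : ∀ a b : Fin n, phi K (Xsym K a b) = X a * X b := by
    intro a b
    unfold Xsym phi symIdx
    rcases le_total a b with hab | hab
    · simp [min_eq_left hab, max_eq_right hab]
    · simp only [aeval_X]
      rw [min_eq_right hab, max_eq_left hab, mul_comm]
  unfold symMinor
  rw [map_sub, map_mul, map_mul, hX, hX, hX, hX]
  ring

lemma phi_of_mem_J {f : MvPolynomial (SymIdx n) K}
    (hf : f ∈ symMinorsIdeal K n) : phi K f = 0 := by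
  have hspan : symMinorsIdeal K n ≤ RingHom.ker (phi K (n := n)).toRingHom := by
    rw [symMinorsIdeal, Ideal.span_le]
    rintro g ⟨i, h, j, k, -, -, rfl⟩
    exact phi_symMinor K i h j k
  exact hspan hf

/-- A polynomial in `J` all of whose monomials are standard is zero. -/
lemma eq_zero_of_std_support (hpar : n % 2 = 0) {f : MvPolynomial (SymIdx n) K}
    (hf : f ∈ symMinorsIdeal K n) (hstd : ∀ d ∈ f.support, Std n d) :
    f = 0 := by
  classical
  have hphi : phi K f = 0 := phi_of_mem_J K hf
  by_contra hne
  obtain ⟨d0, hd0⟩ := (support_nonempty (p := f)).mpr hne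
  have hrepr : f = ∑ d ∈ f.support, monomial d (coeff d f) :=
    (support_sum_monomial_coeff f).symm
  have : phi K f = ∑ d ∈ f.support, monomial (Dfin d) (coeff d f) := by
    conv_lhs => rw [hrepr]
    rw [map_sum]
    apply Finset.sum_congr rfl
    intro d hd
    have : monomial d (coeff d f) = C (coeff d f) * monomial d 1 := by
      rw [C_mul_monomial, mul_one]
    rw [this, map_mul, phi_monomial]
    simp [C_mul_monomial]
  have hcoeff : coeff (Dfin d0) (phi K f) = coeff d0 f := by
    rw [this, coeff_sum]
    rw [Finset.sum_eq_single d0]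
    · simp [coeff_monomial]
    · intro d hd hdne
      rw [coeff_monomial, if_neg]
      intro heq
      apply hdne
      apply std_deg_inj hpar (hstd d hd) (hstd d0 hd0)
      intro a
      rw [← Dfin_apply, ← Dfin_apply, heq]
    · intro hd; exact absurd hd0 hd
  rw [hphi] at hcoeff
  simp only [coeff_zero] at hcoeff
  exact (Finsupp.mem_support_iff.mp hd0) hcoeff.symm


/- ### Production of minors with prescribed leading monomial -/

lemma minor_binomial (i h j k : Fin n) :
    symMinor K i h j k =
      monomial (symMon i j h k) 1 - monomial (symMon i k h j) 1 := by
  unfold symMinor Xsym symMon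
  rw [X_mul_X, X_mul_X]

lemma isAnti_symIdx_iff (a b : Fin n) :
    IsAnti n (symIdx a b).1.1 (symIdx a b).1.2 ↔ IsAnti n a b := by
  show IsAnti n (min a b) (max a b) ↔ IsAnti n a b
  unfold IsAnti
  rcases le_total a b with hab | hab
  · rw [min_eq_left hab, max_eq_right hab]
  · rw [min_eq_right hab, max_eq_left hab]
    constructor <;> (intro h; omega)

variable (m : MonomialOrder (SymIdx n))

/-- The minors' leading-term hypothesis of the main theorem. -/
def HLead : Prop :=
  ∀ i h j k : Fin n, i < h → j < k →
    ((IsAnti n i j ∨ IsAnti n h k) →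
      IsLeadingMonomial m (symMinor K i h j k) (symMon i k h j)) ∧
    (¬ (IsAnti n i j ∨ IsAnti n h k) →
      IsLeadingMonomial m (symMinor K i h j k) (symMon i j h k))

/-- What `comb1` produces: a minor in `J` with leading exponent `d` and
remaining exponent `d'`. -/
def MinorWitness (F : MvPolynomial (SymIdx n) K) (d d' : SymIdx n →₀ ℕ) : Prop :=
  (∃ i h j k : Fin n, i < h ∧ j < k ∧ F = symMinor K i h j k) ∧
  IsLeadingMonomial m F d ∧
  (F = monomial d 1 - monomial d' 1 ∨ F = monomial d' 1 - monomial d 1)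

lemma core (hl : HLead K m) (a a2 b b2 : Fin n) (hab : IsAnti n a b)
    (hP : ¬ IsAnti n a a2) (hQ : ¬ IsAnti n b b2)
    (h1 : ¬ (min a a2 < min b b2 ∧ max a a2 < max b b2))
    (h2 : ¬ (min b b2 < min a a2 ∧ max b b2 < max a a2)) :
    ∃ F d', MinorWitness K m F
      (Finsupp.single (symIdx a a2) 1 + Finsupp.single (symIdx b b2) 1) d' := by
  have hab2 : a ≠ b2 := by
    intro he
    apply hQ
    unfold IsAnti at *
    have := congrArg Fin.val he
    omega
  have hba2 : b ≠ a2 := by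
    intro he
    apply hP
    unfold IsAnti at *
    have := congrArg Fin.val he
    omega
  rcases lt_or_gt_of_ne hab2 with hc1 | hc1 <;> rcases lt_or_gt_of_ne hba2 with hc2 | hc2
  · -- a < b2, b < a2 : minor with rows (a, b2), cols (b, a2), antidiagonal LM
    refine ⟨symMinor K a b2 b a2, symMon a b b2 a2, ⟨a, b2, b, a2, hc1, hc2, rfl⟩, ?_, ?_⟩
    · have := (hl a b2 b a2 hc1 hc2).1 (Or.inl hab)
      have he : symMon a a2 b2 b =
          Finsupp.single (symIdx a a2) 1 + Finsupp.single (symIdx b b2) 1 := by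
        unfold symMon
        rw [symIdx_comm b2 b]
      rwa [he] at this
    · right
      have he : symMon a a2 b2 b =
          Finsupp.single (symIdx a a2) 1 + Finsupp.single (symIdx b b2) 1 := by
        unfold symMon
        rw [symIdx_comm b2 b]
      rw [← he]
      exact minor_binomial K a b2 b a2
  · -- a < b2, a2 < b : comparable, contradiction with h1
    exfalso
    apply h1
    constructor
    · rcases min_cases b b2 with ⟨he, -⟩ | ⟨he, -⟩ <;> rw [he]
      · exact lt_of_le_of_lt (min_le_right a a2) hc2
      · exact lt_of_le_of_lt (min_le_left a a2) hc1
    · rcases max_cases a a2 with ⟨he, -⟩ | ⟨he, -⟩ <;> rw [he]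
      · exact lt_of_lt_of_le hc1 (le_max_right b b2)
      · exact lt_of_lt_of_le hc2 (le_max_left b b2)
  · -- b2 < a, b < a2 : comparable the other way, contradiction with h2
    exfalso
    apply h2
    constructor
    · rcases min_cases a a2 with ⟨he, -⟩ | ⟨he, -⟩ <;> rw [he]
      · exact lt_of_le_of_lt (min_le_right b b2) hc1
      · exact lt_of_le_of_lt (min_le_left b b2) hc2
    · rcases max_cases b b2 with ⟨he, -⟩ | ⟨he, -⟩ <;> rw [he]
      · exact lt_of_lt_of_le hc2 (le_max_right a a2)
      · exact lt_of_lt_of_le hc1 (le_max_left a a2)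
  · -- b2 < a, a2 < b : minor with rows (b2, a), cols (a2, b), antidiagonal LM
    refine ⟨symMinor K b2 a a2 b, symMon b2 a2 a b, ⟨b2, a, a2, b, hc1, hc2, rfl⟩, ?_, ?_⟩
    · have := (hl b2 a a2 b hc1 hc2).1 (Or.inr hab)
      have he : symMon b2 b a a2 =
          Finsupp.single (symIdx a a2) 1 + Finsupp.single (symIdx b b2) 1 := by
        unfold symMon
        rw [symIdx_comm b2 b, add_comm]
      rwa [he] at this
    · right
      have he : symMon b2 b a a2 =
          Finsupp.single (symIdx a a2) 1 + Finsupp.single (symIdx b b2) 1 := by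
        unfold symMon
        rw [symIdx_comm b2 b, add_comm]
      rw [← he]
      exact minor_binomial K b2 a a2 b


lemma isAnti_swap {a b : Fin n} (h : ¬ IsAnti n a b) : ¬ IsAnti n b a := by
  unfold IsAnti at *; omega

lemma core' (hl : HLead K m) (P Q : SymIdx n)
    (hnP : ¬ IsAnti n P.1.1 P.1.2) (hnQ : ¬ IsAnti n Q.1.1 Q.1.2)
    (hc1 : ¬ (P.1.1 < Q.1.1 ∧ P.1.2 < Q.1.2))
    (hc2 : ¬ (Q.1.1 < P.1.1 ∧ Q.1.2 < P.1.2))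
    (a b : Fin n) (haP : a = P.1.1 ∨ a = P.1.2) (hbQ : b = Q.1.1 ∨ b = Q.1.2)
    (hab : IsAnti n a b) :
    ∃ F d', MinorWitness K m F (Finsupp.single P 1 + Finsupp.single Q 1) d' := by
  have hPle : P.1.1 ≤ P.1.2 := P.2
  have hQle : Q.1.1 ≤ Q.1.2 := Q.2
  -- choose the complements
  rcases haP with rfl | rfl <;> rcases hbQ with rfl | rfl
  · obtain ⟨F, d', hw⟩ := core K m hl P.1.1 P.1.2 Q.1.1 Q.1.2 hab hnP hnQ
      (by rwa [min_eq_left hPle, max_eq_right hPle, min_eq_left hQle,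
        max_eq_right hQle])
      (by rwa [min_eq_left hPle, max_eq_right hPle, min_eq_left hQle,
        max_eq_right hQle])
    exact ⟨F, d', by rwa [symIdx_eta, symIdx_eta] at hw⟩
  · obtain ⟨F, d', hw⟩ := core K m hl P.1.1 P.1.2 Q.1.2 Q.1.1 hab hnP
      (isAnti_swap hnQ)
      (by rw [min_comm Q.1.2 Q.1.1, max_comm Q.1.2 Q.1.1, min_eq_left hPle,
        max_eq_right hPle, min_eq_left hQle, max_eq_right hQle]; exact hc1)
      (by rw [min_comm Q.1.2 Q.1.1, max_comm Q.1.2 Q.1.1, min_eq_left hPle,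
        max_eq_right hPle, min_eq_left hQle, max_eq_right hQle]; exact hc2)
    exact ⟨F, d', by rwa [symIdx_eta, symIdx_comm, symIdx_eta] at hw⟩
  · obtain ⟨F, d', hw⟩ := core K m hl P.1.2 P.1.1 Q.1.1 Q.1.2 hab
      (isAnti_swap hnP) hnQ
      (by rw [min_comm P.1.2 P.1.1, max_comm P.1.2 P.1.1, min_eq_left hPle,
        max_eq_right hPle, min_eq_left hQle, max_eq_right hQle]; exact hc1)
      (by rw [min_comm P.1.2 P.1.1, max_comm P.1.2 P.1.1, min_eq_left hPle,
        max_eq_right hPle, min_eq_left hQle, max_eq_right hQle]; exact hc2)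
    exact ⟨F, d', by rwa [symIdx_comm, symIdx_eta, symIdx_eta] at hw⟩
  · obtain ⟨F, d', hw⟩ := core K m hl P.1.2 P.1.1 Q.1.2 Q.1.1 hab
      (isAnti_swap hnP) (isAnti_swap hnQ)
      (by rw [min_comm P.1.2, max_comm P.1.2, min_comm Q.1.2, max_comm Q.1.2,
        min_eq_left hPle, max_eq_right hPle, min_eq_left hQle,
        max_eq_right hQle]; exact hc1)
      (by rw [min_comm P.1.2, max_comm P.1.2, min_comm Q.1.2, max_comm Q.1.2,
        min_eq_left hPle, max_eq_right hPle, min_eq_left hQle,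
        max_eq_right hQle]; exact hc2)
    exact ⟨F, d', by rwa [symIdx_comm, symIdx_eta, symIdx_comm, symIdx_eta] at hw⟩

lemma comb1 (hl : HLead K m) (P Q : SymIdx n) (hg : GenCond n P Q) :
    ∃ F d', MinorWitness K m F (Finsupp.single P 1 + Finsupp.single Q 1) d' := by
  obtain ⟨hnP, hnQ, hcross⟩ := hg
  by_cases hc1 : P.1.1 < Q.1.1 ∧ P.1.2 < Q.1.2
  · refine ⟨symMinor K P.1.1 Q.1.1 P.1.2 Q.1.2, symMon P.1.1 Q.1.2 Q.1.1 P.1.2,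
      ⟨P.1.1, Q.1.1, P.1.2, Q.1.2, hc1.1, hc1.2, rfl⟩, ?_, ?_⟩
    · have := (hl P.1.1 Q.1.1 P.1.2 Q.1.2 hc1.1 hc1.2).2 (by

        rintro (h | h)
        · exact hnP h
        · exact hnQ h)
      have he : symMon P.1.1 P.1.2 Q.1.1 Q.1.2 =
          Finsupp.single P 1 + Finsupp.single Q 1 := by
        unfold symMon
        rw [symIdx_eta, symIdx_eta]
      rwa [he] at this
    · left
      have he : symMon P.1.1 P.1.2 Q.1.1 Q.1.2 =
          Finsupp.single P 1 + Finsupp.single Q 1 := by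
        unfold symMon
        rw [symIdx_eta, symIdx_eta]
      rw [← he]
      exact minor_binomial K P.1.1 Q.1.1 P.1.2 Q.1.2
  · by_cases hc2 : Q.1.1 < P.1.1 ∧ Q.1.2 < P.1.2
    · refine ⟨symMinor K Q.1.1 P.1.1 Q.1.2 P.1.2, symMon Q.1.1 P.1.2 P.1.1 Q.1.2,
        ⟨Q.1.1, P.1.1, Q.1.2, P.1.2, hc2.1, hc2.2, rfl⟩, ?_, ?_⟩
      · have := (hl Q.1.1 P.1.1 Q.1.2 P.1.2 hc2.1 hc2.2).2 (by
          rintro (h | h)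
          · exact hnQ h
          · exact hnP h)
        have he : symMon Q.1.1 Q.1.2 P.1.1 P.1.2 =
            Finsupp.single P 1 + Finsupp.single Q 1 := by
          unfold symMon
          rw [symIdx_eta, symIdx_eta, add_comm]
        rwa [he] at this
      · left
        have he : symMon Q.1.1 Q.1.2 P.1.1 P.1.2 =
            Finsupp.single P 1 + Finsupp.single Q 1 := by
          unfold symMon
          rw [symIdx_eta, symIdx_eta, add_comm]
        rw [← he]
        exact minor_binomial K Q.1.1 P.1.1 Q.1.2 P.1.2
    · rcases hcross with (h | h | h | h) | h
      · exact core' K m hl P Q hnP hnQ hc1 hc2 _ _ (Or.inl rfl) (Or.inl rfl) h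
      · exact core' K m hl P Q hnP hnQ hc1 hc2 _ _ (Or.inl rfl) (Or.inr rfl) h
      · exact core' K m hl P Q hnP hnQ hc1 hc2 _ _ (Or.inr rfl) (Or.inl rfl) h
      · exact core' K m hl P Q hnP hnQ hc1 hc2 _ _ (Or.inr rfl) (Or.inr rfl) h
      · exact absurd h hc1


lemma single_add_single_le {u : SymIdx n →₀ ℕ} {P Q : SymIdx n} (hne : P ≠ Q)
    (hP : P ∈ u.support) (hQ : Q ∈ u.support) :
    Finsupp.single P 1 + Finsupp.single Q 1 ≤ u := by
  rw [Finsupp.mem_support_iff] at hP hQ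
  intro R
  simp only [Finsupp.add_apply, Finsupp.single_apply]
  by_cases h1 : P = R <;> by_cases h2 : Q = R <;>
    simp only [h1, h2, if_pos, if_neg, if_true, if_false]
  · exact absurd (h1.trans h2.symm) hne
  · subst h1; omega
  · subst h2; omega
  · omega

lemma reduce (hpar : n % 2 = 0) (hl : HLead K m) (u : SymIdx n →₀ ℕ) :
    ∃ r : MvPolynomial (SymIdx n) K,
      (monomial u 1 - r) ∈ symMinorsIdeal K n ∧
      (∀ e ∈ r.support, Std n e ∧ m.toSyn e ≤ m.toSyn u) ∧
      (Std n u → r = monomial u 1) := by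
  classical
  suffices H : ∀ s : m.syn, ∀ u : SymIdx n →₀ ℕ, m.toSyn u = s →
      ∃ r : MvPolynomial (SymIdx n) K,
        (monomial u 1 - r) ∈ symMinorsIdeal K n ∧
        (∀ e ∈ r.support, Std n e ∧ m.toSyn e ≤ m.toSyn u) ∧
        (Std n u → r = monomial u 1) by
    exact H _ u rfl
  intro s
  induction s using WellFoundedLT.induction with
  | ind s ih =>
  intro u hus
  by_cases hstd : Std n u
  · refine ⟨monomial u 1, by rw [sub_self]; exact Ideal.zero_mem _, ?_, fun _ => rfl⟩
    intro e he
    rw [support_monomial, if_neg (one_ne_zero)] at he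
    rw [Finset.mem_singleton] at he
    subst he
    exact ⟨hstd, le_rfl⟩
  · unfold Std at hstd
    push_neg at hstd
    obtain ⟨P, hPmem, Q, hQmem, hg⟩ := hstd
    have hne : P ≠ Q := genCond_ne hpar hg
    set g : SymIdx n →₀ ℕ := Finsupp.single P 1 + Finsupp.single Q 1 with hgdef
    have hle : g ≤ u := single_add_single_le hne hPmem hQmem
    set w : SymIdx n →₀ ℕ := u - g with hwdef
    have hu : u = w + g := (tsub_add_cancel_of_le hle).symm
    obtain ⟨F, d', hFmem, hFlm, hFbin⟩ := comb1 K m hl P Q hg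
    have hFJ : F ∈ symMinorsIdeal K n := Ideal.subset_span hFmem
    have hFne : F ≠ 0 := by
      intro h0
      rw [h0] at hFlm
      simpa using hFlm.1
    have hgd' : g ≠ d' := by
      intro he
      apply hFne
      rcases hFbin with h | h <;> rw [h, ← hgdef, he, sub_self]
    have hd'supp : d' ∈ F.support := by
      rw [mem_support_iff]
      rcases hFbin with h | h
      · rw [h, coeff_sub, coeff_monomial, coeff_monomial,
          if_neg (fun hh : g = d' => hgd' hh), if_pos rfl]
        simp
      · rw [h, coeff_sub, coeff_monomial, coeff_monomial, if_pos rfl,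
          if_neg (fun hh : g = d' => hgd' hh)]
        simp
    have hlmg : IsLeadingMonomial m F g := hFlm
    have hlt : m.toSyn d' < m.toSyn g :=
      hlmg.2 d' hd'supp (fun hh => hgd' hh.symm)
    set u' : SymIdx n →₀ ℕ := w + d' with hu'def
    have hlt' : m.toSyn u' < s := by
      rw [← hus, hu, hu'def, map_add, map_add]
      exact (add_lt_add_iff_left _).mpr hlt
    obtain ⟨r, hr1, hr2, hr3⟩ := ih (m.toSyn u') hlt' u' rfl
    refine ⟨r, ?_, ?_, ?_⟩
    · have hdiff : (monomial u (1 : K)) - monomial u' 1 =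
          monomial w 1 * (monomial g 1 - monomial d' 1) := by
        rw [mul_sub, monomial_mul, monomial_mul, one_mul, ← hu, hu'def]
      have hdiffJ : (monomial u (1 : K)) - monomial u' 1 ∈ symMinorsIdeal K n := by
        rw [hdiff]
        rcases hFbin with h | h
        · rw [← hgdef] at h
          rw [← h]
          exact Ideal.mul_mem_left _ _ hFJ
        · rw [← hgdef] at h
          have : monomial g (1:K) - monomial d' 1 = -F := by rw [h]; ring
          rw [this]
          exact Ideal.mul_mem_left _ _ ((symMinorsIdeal K n).neg_mem hFJ)
      have : (monomial u (1 : K)) - r =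
          ((monomial u 1) - monomial u' 1) + ((monomial u' 1) - r) := by ring
      rw [this]
      exact Ideal.add_mem _ hdiffJ hr1
    · intro e he
      refine ⟨(hr2 e he).1, le_trans (hr2 e he).2 ?_⟩
      rw [hus]
      exact le_of_lt hlt'
    · intro hs
      exact absurd hg (hs P hPmem Q hQmem)


lemma not_std_imp_mem_Kideal (hpar : n % 2 = 0) {d : SymIdx n →₀ ℕ}
    (hstd : ¬ Std n d) : (monomial d 1 : MvPolynomial (SymIdx n) K) ∈ Kideal K n := by
  unfold Std at hstd
  push_neg at hstd
  obtain ⟨P, hPmem, Q, hQmem, hg⟩ := hstd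
  have hne : P ≠ Q := genCond_ne hpar hg
  have hle : Finsupp.single P 1 + Finsupp.single Q 1 ≤ d :=
    single_add_single_le hne hPmem hQmem
  have hXPQ : (X P : MvPolynomial (SymIdx n) K) * X Q ∈ Kideal K n := by
    apply Ideal.subset_span
    refine ⟨P.1.1, P.1.2, Q.1.1, Q.1.2, P.2, Q.2, hg.1, hg.2.1, hg.2.2, ?_⟩
    rw [symIdx_eta, symIdx_eta]
  have hsplit : (monomial d 1 : MvPolynomial (SymIdx n) K) =
      monomial (d - (Finsupp.single P 1 + Finsupp.single Q 1)) 1 * (X P * X Q) := by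
    rw [X_mul_X, monomial_mul, one_mul, tsub_add_cancel_of_le hle]
  rw [hsplit]
  exact Ideal.mul_mem_left _ _ hXPQ

lemma lm_not_std (hpar : n % 2 = 0) (hl : HLead K m)
    {f : MvPolynomial (SymIdx n) K} (hfJ : f ∈ symMinorsIdeal K n)
    {d : SymIdx n →₀ ℕ} (hlm : IsLeadingMonomial m f d) : ¬ Std n d := by
  classical
  intro hstd
  choose rr hrr1 hrr2 hrr3 using fun v => reduce K m hpar hl v
  set r : MvPolynomial (SymIdx n) K :=
    ∑ v ∈ f.support, C (coeff v f) * rr v with hrdef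
  have hfsum : f = ∑ v ∈ f.support, C (coeff v f) * monomial v 1 := by
    conv_lhs => rw [← support_sum_monomial_coeff f]
    exact Finset.sum_congr rfl fun v _ => by rw [C_mul_monomial, mul_one]
  have hfr : f - r ∈ symMinorsIdeal K n := by
    have e1 : ∑ v ∈ f.support, C (coeff v f) * (monomial v 1 - rr v)
        = (∑ v ∈ f.support, C (coeff v f) * monomial v 1) -
          ∑ v ∈ f.support, C (coeff v f) * rr v := by
      rw [← Finset.sum_sub_distrib]
      exact Finset.sum_congr rfl fun v _ => by ring
    rw [show f - r = ∑ v ∈ f.support, C (coeff v f) * (monomial v 1 - rr v) from by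
      rw [e1, ← hfsum, ← hrdef]]
    exact Ideal.sum_mem _ fun v _ => Ideal.mul_mem_left _ _ (hrr1 v)
  have hrJ : r ∈ symMinorsIdeal K n := by
    have : r = f - (f - r) := by ring
    rw [this]
    exact Ideal.sub_mem _ hfJ hfr
  have hsupp : ∀ e ∈ r.support, Std n e := by
    intro e he
    rw [hrdef] at he
    obtain ⟨v, hv, hev⟩ := Finset.mem_biUnion.mp (MvPolynomial.support_sum he)
    have : e ∈ (rr v).support := by
      have hCs : (C (coeff v f) * rr v) = (coeff v f) • rr v := by
        rw [smul_eq_C_mul]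
      rw [hCs] at hev
      exact Finsupp.support_smul hev
    exact (hrr2 v e this).1
  have hr0 : r = 0 := eq_zero_of_std_support K hpar hrJ hsupp
  have hcoeff : coeff d r = coeff d f := by
    rw [hrdef, coeff_sum]
    rw [Finset.sum_eq_single d]
    · rw [hrr3 d hstd, coeff_C_mul, coeff_monomial, if_pos rfl, mul_one]
    · intro v hv hvd
      have hz : coeff d (rr v) = 0 := by
        by_contra hc
        have hd : d ∈ (rr v).support := mem_support_iff.mpr hc
        have h1 : m.toSyn d ≤ m.toSyn v := (hrr2 v d hd).2
        have h2 : m.toSyn v < m.toSyn d := hlm.2 v hv hvd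
        exact absurd h1 (not_le.mpr h2)
      rw [coeff_C_mul, hz, mul_zero]
    · intro hd
      exact absurd hlm.1 hd
  rw [hr0, coeff_zero] at hcoeff
  exact (mem_support_iff.mp hlm.1) hcoeff.symm

end SymAux

/-- Let `n = 2m` be even, and let `≻` be a monomial order such that the
leading monomial of the 2-minor `X_{ij}X_{hk} - X_{ik}X_{hj}` (`i < h`,
`j < k`) is the antidiagonal `X_{ik}X_{hj}` when `i + j = n + 1` or
`h + k = n + 1`, and the main diagonal `X_{ij}X_{hk}` otherwise. Then the
initial ideal of `J(2,n)` equals `K(2,n)`. -/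
theorem initial_symMinorsIdeal_eq_Kideal (K : Type*) [Field K]
    (mhalf n : ℕ) (hm : 1 ≤ mhalf) (hn : n = 2 * mhalf)
    (m : MonomialOrder (SymIdx n))
    (hlead : ∀ i h j k : Fin n, i < h → j < k →
      ((IsAnti n i j ∨ IsAnti n h k) →
        IsLeadingMonomial m (symMinor K i h j k) (symMon i k h j)) ∧
      (¬ (IsAnti n i j ∨ IsAnti n h k) →
        IsLeadingMonomial m (symMinor K i h j k) (symMon i j h k))) :
    initialIdeal m (symMinorsIdeal K n) = Kideal K n := by
  have hpar : n % 2 = 0 := by omega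
  have hl : SymAux.HLead K m := hlead
  apply le_antisymm
  · rw [initialIdeal, Ideal.span_le]
    rintro g ⟨f, hfJ, d, hlm, rfl⟩
    exact SymAux.not_std_imp_mem_Kideal K hpar (SymAux.lm_not_std K m hpar hl hfJ hlm)
  · rw [Kideal, Ideal.span_le]
    rintro g ⟨i, j, h, k, hij, hhk, hna1, hna2, hcond, rfl⟩
    have hg : SymAux.GenCond n (symIdx i j) (symIdx h k) := by
      rw [SymAux.symIdx_of_le hij, SymAux.symIdx_of_le hhk]
      exact ⟨hna1, hna2, hcond⟩
    obtain ⟨F, d', hFmem, hFlm, -⟩ := SymAux.comb1 K m hl _ _ hg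
    apply Ideal.subset_span
    exact ⟨F, Ideal.subset_span hFmem, _, hFlm, by rw [SymAux.X_mul_X]⟩
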